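/- Let Ω be a generalized full vertex superalgebra with charge space (H, (−,−)_c), and let e_γ ∈ Ω^γ satisfy L_Ω(−1)e_γ = L̄_Ω(−1)e_γ = 0. If a ∈ Ω^α satisfies e_γ(−1,−1)a ≠ 0, then (α,γ)_c ∈ ℤ and Ŷ(a,z)e_γ = (−1)^{|a||e_γ|+(α,γ)_c} exp(L_Ω(−1)z + L̄_Ω(−1)z̄)(e_γ·a). -/
import Mathlib


/-!
Statement 10: In a generalized full vertex superalgebra `Ω` with charge bilinear form
`(−,−)_c`, let `e_γ ∈ Ω^γ` be translation invariant (`L_Ω(−1)e_γ = L̄_Ω(−1)e_γ = 0`),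
so that `Ŷ(e_γ,z) = e_γ(−1,−1)` is the constant left multiplication.  If `a ∈ Ω^α`
satisfies `e_γ(−1,−1)a ≠ 0`, then `(α,γ)_c ∈ ℤ` and
`Ŷ(a,z)e_γ = (−1)^{|a||e_γ|+(α,γ)_c} · exp(L_Ω(−1)z + L̄_Ω(−1)z̄)(e_γ·a)`.

Formal series `Σ c_{u,v} z^u z̄^v` are encoded as coefficient functions
`ℝ → ℝ → Ω`, `(u,v) ↦ c_{u,v}`; the mode expansion convention is
`Ŷ(a,z)b = Σ_{r,s} a(r,s)b · z^{−r−1} z̄^{−s−1}`.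
-/

noncomputable section

variable {Ω : Type*} [AddCommGroup Ω] [Module ℂ Ω]

open Classical in
/-- `(−1)^x` for `x ∈ ℤ ⊂ ℝ` (and junk value `1` otherwise). -/
noncomputable def negOnePowR (x : ℝ) : ℂ :=
  if h : ∃ n : ℤ, x = (n : ℝ) then (-1 : ℂ) ^ h.choose else 1

/-- The series with a single term `x · z^r z̄^s`. -/
def fsingle (r s : ℝ) (x : Ω) : ℝ → ℝ → Ω := fun u v => if u = r ∧ v = s then x else 0

/-- Multiplication of a series by `z^c`. -/
def shiftF (c : ℝ) (G : ℝ → ℝ → Ω) : ℝ → ℝ → Ω := fun u v => G (u - c) v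

/-- The formal limit `z → −z` on a series whose exponent differences are integers:
each coefficient at `(u,v)` gets multiplied by `(−1)^{u−v}`. -/
noncomputable def flipF (G : ℝ → ℝ → Ω) : ℝ → ℝ → Ω :=
  fun u v => negOnePowR (u - v) • G u v

/-- The action of `exp(L z + L̄ z̄)` on formal series. -/
noncomputable def expT (Lm1 Lbm1 : Ω →ₗ[ℂ] Ω) (G : ℝ → ℝ → Ω) : ℝ → ℝ → Ω :=
  fun u v => ∑ᶠ (m : ℕ) (k : ℕ),
    (((m.factorial * k.factorial : ℕ) : ℂ))⁻¹ •
      ((Lm1 ^ m) ((Lbm1 ^ k) (G (u - (m : ℝ)) (v - (k : ℝ)))))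


lemma negOnePowR_ne_zero (x : ℝ) : negOnePowR x ≠ 0 := by
  unfold negOnePowR
  split
  · exact zpow_ne_zero _ (by norm_num)
  · exact one_ne_zero

lemma expT_shift (L Lb : Ω →ₗ[ℂ] Ω) (c : ℝ) (H : ℝ → ℝ → Ω) (u v : ℝ) :
    expT L Lb (shiftF c H) u v = expT L Lb H (u - c) v := by
  unfold expT shiftF
  refine finsum_congr fun m => finsum_congr fun k => ?_
  have h : u - (m : ℝ) - c = u - c - (m : ℝ) := by ring
  rw [h]

lemma expT_smul (L Lb : Ω →ₗ[ℂ] Ω) (c : ℂ) (H : ℝ → ℝ → Ω) (u v : ℝ) :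
    expT L Lb (fun u v => c • H u v) u v = c • expT L Lb H u v := by
  unfold expT
  rw [smul_finsum]
  refine finsum_congr fun m => ?_
  rw [smul_finsum]
  refine finsum_congr fun k => ?_
  rw [map_smul, map_smul, smul_comm]

lemma flip_shift_single (c : ℝ) (x : Ω) :
    flipF (shiftF c (fsingle 0 0 x)) = shiftF c (fsingle 0 0 (negOnePowR c • x)) := by
  funext u v
  simp only [flipF, shiftF, fsingle]
  split_ifs with h
  · obtain ⟨h1, h2⟩ := h
    have hu : u = c := by linarith
    subst hu; subst h2
    simp
  · simp

lemma expT_single_zero (L Lb : Ω →ₗ[ℂ] Ω) (x : Ω) :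
    expT L Lb (fsingle 0 0 x) 0 0 = x := by
  unfold expT
  rw [finsum_eq_single _ 0 (fun m hm => ?_)]
  · rw [finsum_eq_single _ 0 (fun k hk => ?_)]
    · simp [fsingle]
    · have : (0 : ℝ) - (k : ℝ) ≠ 0 := by
        simp only [zero_sub, neg_ne_zero, Nat.cast_ne_zero]; exact hk
      simp [fsingle, this, hk]
  · rw [finsum_eq_zero_of_forall_eq_zero (fun k => ?_)]
    have : (0 : ℝ) - (m : ℝ) ≠ 0 := by
      simp only [zero_sub, neg_ne_zero, Nat.cast_ne_zero]; exact hm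
    simp [fsingle, this, hm]

/-- Here `Yae r s = a(r,s)e_γ`, `Yea r s = e_γ(r,s)a`,
`aγc = (α,γ)_c`, and `pa, pγ` are the parities of `a` and `e_γ`.
Assuming that `Ŷ(e_γ,z)` is the constant `e_γ(−1,−1)` (translation invariance of
`e_γ`), that `z^{(α,γ)_c}Ŷ(a,z)e_γ` has integer exponent differences (membership in
`Ω((z,z̄,|z|^ℝ))`), and the skew-symmetry
`z^{(α,γ)_c}Ŷ(a,z)e_γ = (−1)^{|a||e_γ|} exp(L(−1)z+L̄(−1)z̄) lim_{z→−z} z^{(α,γ)_c}Ŷ(e_γ,z)a`,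
if `e_γ(−1,−1)a ≠ 0` then `(α,γ)_c ∈ ℤ` and
`Ŷ(a,z)e_γ = (−1)^{|a||e_γ|+(α,γ)_c} exp(L(−1)z+L̄(−1)z̄)(e_γ·a)`. -/
theorem lem_vacuum_like
    (Lm1 Lbm1 : Ω →ₗ[ℂ] Ω)
    (a eγ : Ω) (aγc : ℝ) (pa pγ : ℤ)
    (Yae Yea : ℝ → ℝ → Ω)
    (hLeγ : Lm1 eγ = 0) (hLbeγ : Lbm1 eγ = 0)
    (hconst : ∀ r s : ℝ, Yea r s = if r = -1 ∧ s = -1 then Yea (-1) (-1) else 0)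
    (hsupp : ∀ u v : ℝ, shiftF aγc (fun u v => Yae (-u - 1) (-v - 1)) u v ≠ 0 →
        ∃ n : ℤ, u - v = (n : ℝ))
    (hskew : ∀ u v : ℝ, shiftF aγc (fun u v => Yae (-u - 1) (-v - 1)) u v
        = ((-1 : ℂ) ^ (pa * pγ)) •
            expT Lm1 Lbm1 (flipF (shiftF aγc (fsingle 0 0 (Yea (-1) (-1))))) u v)
    (hne : Yea (-1) (-1) ≠ 0) :
    (∃ n : ℤ, aγc = (n : ℝ))
    ∧ ∀ u v : ℝ, Yae (-u - 1) (-v - 1)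
        = (((-1 : ℂ) ^ (pa * pγ)) * negOnePowR aγc) •
            expT Lm1 Lbm1 (fsingle 0 0 (Yea (-1) (-1))) u v := by
  set x := Yea (-1) (-1) with hx
  have key : ∀ u v : ℝ, shiftF aγc (fun u v => Yae (-u - 1) (-v - 1)) u v
      = (((-1 : ℂ) ^ (pa * pγ)) * negOnePowR aγc) •
          expT Lm1 Lbm1 (fsingle 0 0 x) (u - aγc) v := by
    intro u v
    rw [hskew u v, flip_shift_single, expT_shift]
    have hs : (fsingle 0 0 (negOnePowR aγc • x) : ℝ → ℝ → Ω)
        = fun u v => negOnePowR aγc • fsingle 0 0 x u v := by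
      funext u v
      simp only [fsingle]
      split_ifs <;> simp
    rw [hs, expT_smul, smul_smul]
  have hscal : ((-1 : ℂ) ^ (pa * pγ)) * negOnePowR aγc ≠ 0 :=
    mul_ne_zero (zpow_ne_zero _ (by norm_num)) (negOnePowR_ne_zero _)
  have h0 := key aγc 0
  have hG00 : shiftF aγc (fun u v => Yae (-u - 1) (-v - 1)) aγc 0 ≠ 0 := by
    rw [h0]
    rw [sub_self, expT_single_zero]
    exact smul_ne_zero hscal hne
  obtain ⟨n, hn⟩ := hsupp aγc 0 hG00
  constructor
  · exact ⟨n, by linarith⟩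
  intro u v
  have h1 := key (u + aγc) v
  simp only [shiftF, add_sub_cancel_right] at h1
  exact h1


end
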